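/- Let H_S be a Hermitian matrix on ℂ^{d_S} with orthonormal eigenbasis {|E_k^S⟩} and eigenvalues E_k^S, and let H_B be a Hermitian matrix on ℂ^{d_B} with orthonormal eigenbasis {|E_q^B⟩} and eigenvalues E_q^B. Let H₀ = H_S ⊗ 1 + 1 ⊗ H_B on ℂ^{d_S} ⊗ ℂ^{d_B}, fix E ∈ ℝ and Δ > 0, and let F be the orthogonal projection onto the span of the product vectors |E_k^S⟩ ⊗ |E_q^B⟩ with E_k^S + E_q^B ∈ [E, E+Δ]; assume F ≠ 0. Then Tr_B(F / rank F) = Σ_{k=1}^{d_S} p_k |E_k^S⟩⟨E_k^S| with p_k = Ω_Δ^B(E − E_k^S) / Σ_{l=1}^{d_S} Ω_Δ^B(E − E_l^S), where Ω_Δ^B(x) denotes the number of indices q (with multiplicity) such that E_q^B ∈ [x, x+Δ]. -/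

import Mathlib

open scoped ComplexOrder

noncomputable section

/-- The trace norm of a complex square matrix: the sum of its singular values,
equal to the trace of `√(Xᴴ X)`. -/
def traceNorm {n : Type*} [Fintype n] [DecidableEq n] (X : Matrix n n ℂ) : ℝ :=
  (((Matrix.posSemidef_conjTranspose_mul_self X).1.eigenvectorUnitary : Matrix n n ℂ) *
    Matrix.diagonal (fun i => ((√((Matrix.posSemidef_conjTranspose_mul_self X).1.eigenvalues i) : ℝ) : ℂ)) *
    (star (Matrix.posSemidef_conjTranspose_mul_self X).1.eigenvectorUnitary : Matrix n n ℂ)).trace.re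

/-- The operator norm (largest singular value) of a complex square matrix. -/
def opNorm {n : Type*} [Fintype n] [DecidableEq n] (X : Matrix n n ℂ) : ℝ :=
  ‖Matrix.toEuclideanCLM (𝕜 := ℂ) X‖
/-- The partial trace over the second (bath) tensor factor. -/
def ptraceB {dS dB : Type*} [Fintype dB] (M : Matrix (dS × dB) (dS × dB) ℂ) :
    Matrix dS dS ℂ :=
  Matrix.of fun i j => ∑ b, M (i, b) (j, b)



lemma kron_conjT {m n p q : Type*} (A : Matrix m n ℂ) (B : Matrix p q ℂ) :
    Matrix.conjTranspose (Matrix.kroneckerMap (· * ·) A B)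
      = Matrix.kroneckerMap (· * ·) (Matrix.conjTranspose A) (Matrix.conjTranspose B) := by
  ext ⟨i, b⟩ ⟨j, c⟩
  simp [Matrix.conjTranspose_apply, Matrix.kroneckerMap_apply, mul_comm]

open Kronecker


/-- the reduced state of the (normalized) noninteracting
microcanonical projector is diagonal in the eigenbasis of `H_S`, with weights
given by the counting of bath states. -/
theorem ptraceB_microcanonical_noninteracting {dS dB : ℕ}
    (HS : Matrix (Fin dS) (Fin dS) ℂ) (HB : Matrix (Fin dB) (Fin dB) ℂ)
    (US : Matrix.unitaryGroup (Fin dS) ℂ) (UB : Matrix.unitaryGroup (Fin dB) ℂ)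
    (ES : Fin dS → ℝ) (EB : Fin dB → ℝ)
    -- orthonormal eigenbases of `H_S` and `H_B` (the columns of `US`, `UB`)
    (hHS : HS = (US : Matrix (Fin dS) (Fin dS) ℂ) *
      Matrix.diagonal (fun k => (ES k : ℂ)) * star (US : Matrix (Fin dS) (Fin dS) ℂ))
    (hHB : HB = (UB : Matrix (Fin dB) (Fin dB) ℂ) *
      Matrix.diagonal (fun q => (EB q : ℂ)) * star (UB : Matrix (Fin dB) (Fin dB) ℂ))
    (H₀ : Matrix (Fin dS × Fin dB) (Fin dS × Fin dB) ℂ)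
    (hH₀ : H₀ = HS ⊗ₖ (1 : Matrix (Fin dB) (Fin dB) ℂ)
      + (1 : Matrix (Fin dS) (Fin dS) ℂ) ⊗ₖ HB)
    (E Δ : ℝ) (hΔ : 0 < Δ)
    -- the projection onto the span of the product eigenvectors with total
    -- energy in the window `[E, E+Δ]`
    (F : Matrix (Fin dS × Fin dB) (Fin dS × Fin dB) ℂ)
    (hF : F = ((US : Matrix (Fin dS) (Fin dS) ℂ) ⊗ₖ (UB : Matrix (Fin dB) (Fin dB) ℂ))
      * Matrix.diagonal (fun kq : Fin dS × Fin dB =>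
          Set.indicator (Set.Icc E (E + Δ)) (fun _ => (1 : ℂ)) (ES kq.1 + EB kq.2))
      * star ((US : Matrix (Fin dS) (Fin dS) ℂ) ⊗ₖ (UB : Matrix (Fin dB) (Fin dB) ℂ)))
    (hFne : F ≠ 0)
    -- the number of bath levels in the window `[x, x+Δ]`
    (ΩB : ℝ → ℕ) (hΩB : ∀ x, ΩB x = Nat.card {q // EB q ∈ Set.Icc x (x + Δ)}) :
    ptraceB (((F.rank : ℂ))⁻¹ • F) =
      (US : Matrix (Fin dS) (Fin dS) ℂ) *
        Matrix.diagonal (fun k =>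
          (((ΩB (E - ES k) : ℝ) / ∑ l, (ΩB (E - ES l) : ℝ) : ℝ) : ℂ)) *
        star (US : Matrix (Fin dS) (Fin dS) ℂ) := by
  classical
  set U : Matrix (Fin dS) (Fin dS) ℂ := (US : Matrix (Fin dS) (Fin dS) ℂ) with hUdef
  set V : Matrix (Fin dB) (Fin dB) ℂ := (UB : Matrix (Fin dB) (Fin dB) ℂ) with hVdef
  set d : Fin dS × Fin dB → ℂ := fun kq =>
    Set.indicator (Set.Icc E (E + Δ)) (fun _ => (1 : ℂ)) (ES kq.1 + EB kq.2) with hddef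
  set N : Fin dS → ℕ := fun k =>
    (Finset.univ.filter fun q => ES k + EB q ∈ Set.Icc E (E + Δ)).card with hNdef
  -- column normalization of V
  have hVcol : ∀ q : Fin dB, (∑ b, V b q * star (V b q)) = 1 := by
    intro q
    have h1 : star V * V = 1 := (Unitary.mem_iff.mp UB.prop).1
    have h2 := congrFun (congrFun (congrArg (fun M : Matrix (Fin dB) (Fin dB) ℂ => M) h1) q) q
    simpa [Matrix.mul_apply, Matrix.one_apply, Matrix.star_apply, mul_comm] using h2
  -- the inner sum of the indicator counts bath levels
  have hNk : ∀ k, (∑ q, d (k, q)) = (N k : ℂ) := by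
    intro k
    simp only [hddef, Set.indicator_apply]
    rw [Finset.sum_boole]
  -- ΩB matches N
  have hΩN : ∀ k, ΩB (E - ES k) = N k := by
    intro k
    rw [hΩB, Nat.card_eq_fintype_card, Fintype.card_subtype, hNdef]
    congr 1
    ext q
    simp only [Finset.mem_filter, Finset.mem_univ, true_and, Set.mem_Icc]
    constructor <;> rintro ⟨h1, h2⟩ <;> constructor <;> linarith
  -- W = U ⊗ₖ V has unit determinant
  have hW1 : (U ⊗ₖ V) * star (U ⊗ₖ V) = 1 := by
    have hU1 : U * Matrix.conjTranspose U = 1 := (Unitary.mem_iff.mp US.prop).2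
    have hV1 : V * Matrix.conjTranspose V = 1 := (Unitary.mem_iff.mp UB.prop).2
    rw [Matrix.star_eq_conjTranspose, kron_conjT, ← Matrix.mul_kronecker_mul,
      hU1, hV1, Matrix.one_kronecker_one]
  have hW1' : star (U ⊗ₖ V) * (U ⊗ₖ V) = 1 := by
    have hU1 : Matrix.conjTranspose U * U = 1 := (Unitary.mem_iff.mp US.prop).1
    have hV1 : Matrix.conjTranspose V * V = 1 := (Unitary.mem_iff.mp UB.prop).1
    rw [Matrix.star_eq_conjTranspose, kron_conjT, ← Matrix.mul_kronecker_mul,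
      hU1, hV1, Matrix.one_kronecker_one]
  have hdetW : IsUnit (U ⊗ₖ V).det := Matrix.isUnit_det_of_right_inverse hW1
  have hdetW' : IsUnit (star (U ⊗ₖ V)).det := Matrix.isUnit_det_of_right_inverse hW1'
  -- rank of F
  have hrank : F.rank = ∑ k, N k := by
    rw [hF, Matrix.rank_mul_eq_left_of_isUnit_det _ _ hdetW',
      Matrix.rank_mul_eq_right_of_isUnit_det _ _ hdetW, Matrix.rank_diagonal,
      Fintype.card_subtype, Finset.card_filter, Fintype.sum_prod_type]
    refine Finset.sum_congr rfl fun k _ => ?_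
    rw [hNdef]
    simp only [Finset.card_filter]
    refine Finset.sum_congr rfl fun q _ => ?_
    by_cases h : E ≤ ES k + EB q ∧ ES k + EB q ≤ E + Δ <;>
      simp [hddef, Set.indicator_apply, Set.mem_Icc, h]
  -- the total count is nonzero
  have hsum_ne : (∑ k, N k) ≠ 0 := by
    intro h0
    apply hFne
    have hdz : ∀ kq, d kq = 0 := by
      rintro ⟨k, q⟩
      have hk : N k = 0 := by
        have := (Finset.sum_eq_zero_iff.mp h0) k (Finset.mem_univ k)
        exact this
      by_contra hne
      have hm : ES k + EB q ∈ Set.Icc E (E + Δ) := by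
        by_contra hm
        exact hne (by simp [hddef, Set.indicator_apply, Set.mem_Icc,
          Set.mem_Icc.not.mp hm])
      have : q ∈ Finset.univ.filter fun q => ES k + EB q ∈ Set.Icc E (E + Δ) := by
        simp only [Finset.mem_filter, Finset.mem_univ, true_and]
        exact hm
      have hpos : 0 < N k := Finset.card_pos.mpr ⟨q, this⟩
      omega
    have : Matrix.diagonal d = 0 := by
      have : d = fun _ => 0 := funext hdz
      rw [this]
      simp
    rw [hF, this]
    simp
  -- partial trace of F
  have hpt : ptraceB F = U * Matrix.diagonal (fun k => (N k : ℂ)) * star U := by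
    ext i j
    show (∑ b, F (i, b) (j, b)) = (U * Matrix.diagonal (fun k => (N k : ℂ)) * star U) i j
    rw [hF]
    simp only [Matrix.mul_apply, Matrix.mul_diagonal, Matrix.star_apply,
      Matrix.kroneckerMap_apply, Matrix.diagonal_apply]
    simp only [mul_ite, mul_zero, ite_mul, zero_mul, Finset.sum_ite_eq',
      Finset.mem_univ, if_true]
    rw [Finset.sum_comm, Fintype.sum_prod_type]
    refine Finset.sum_congr rfl fun k _ => ?_
    have hq : ∀ q : Fin dB, (∑ b, U i k * V b q * d (k, q) * star (U j k * V b q))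
        = U i k * d (k, q) * star (U j k) := by
      intro q
      have h1 : (∑ b, U i k * V b q * d (k, q) * star (U j k * V b q))
          = (U i k * d (k, q) * star (U j k)) * ∑ b, V b q * star (V b q) := by
        rw [Finset.mul_sum]
        refine Finset.sum_congr rfl fun b _ => ?_
        simp only [star_mul']
        ring
      rw [h1, hVcol q, mul_one]
    calc (∑ q, ∑ b, U i k * V b q * d (k, q) * star (U j k * V b q))
        = ∑ q, U i k * d (k, q) * star (U j k) :=
          Finset.sum_congr rfl fun q _ => hq q
      _ = U i k * (∑ q, d (k, q)) * star (U j k) := by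
          rw [Finset.mul_sum, Finset.sum_mul]
      _ = U i k * (N k : ℂ) * star (U j k) := by rw [hNk k]
  -- assemble
  have hpts : ∀ (c : ℂ) (M : Matrix (Fin dS × Fin dB) (Fin dS × Fin dB) ℂ),
      ptraceB (c • M) = c • ptraceB M := by
    intro c M
    ext i j
    simp [ptraceB, Finset.mul_sum]
  have hdiag : ((((∑ k, N k : ℕ) : ℂ))⁻¹ • Matrix.diagonal (fun k => (N k : ℂ)))
      = Matrix.diagonal (fun k =>
          (((ΩB (E - ES k) : ℝ) / ∑ l, (ΩB (E - ES l) : ℝ) : ℝ) : ℂ)) := by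
    have hfun : ((((∑ k, N k : ℕ) : ℂ))⁻¹ • fun k => (N k : ℂ)) = fun k =>
        (((ΩB (E - ES k) : ℝ) / ∑ l, (ΩB (E - ES l) : ℝ) : ℝ) : ℂ) := by
      funext k
      simp only [Pi.smul_apply, smul_eq_mul, hΩN]
      push_cast
      rw [div_eq_mul_inv]
      ring
    rw [← Matrix.diagonal_smul, hfun]
  rw [hpts, hpt, hrank, ← Matrix.smul_mul, ← Matrix.mul_smul, hdiag]


end
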